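/- The k-cubic relations imply the 2k-cubic relations: if elements u_{ij} of a *-algebra satisfy a c_1⋯c_k b = 0 for all a ≠ b on the same row or column of the matrix u = (u_{ij}) and all c_1,...,c_k ∈ {u_{ij}}, then they also satisfy a c_1⋯c_{2k} b = 0 under the same conditions, provided u is orthogonal (uu^t = u^t u = 1 with u_{ij} self-adjoint). -/

import Mathlib

open scoped BigOperators

/-- The word `u_{c₁} ⋯ u_{c_k}` in the generators. -/
def word {A : Type*} [Ring A] {n : ℕ} (u : Fin n → Fin n → A)
    {k : ℕ} (c : Fin k → Fin n × Fin n) : A :=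
  (List.ofFn fun r => u (c r).1 (c r).2).prod

/-- The `k`-cubic relations: `a c₁ ⋯ c_k b = 0` whenever `a ≠ b` are entries on
the same row or on the same column of `u`, and `c₁,…,c_k` are arbitrary
generators. -/
def KCubic {A : Type*} [Ring A] {n : ℕ} (u : Fin n → Fin n → A) (k : ℕ) : Prop :=
  ∀ c : Fin k → Fin n × Fin n,
    (∀ i j l, j ≠ l → u i j * word u c * u i l = 0) ∧
    (∀ i j l, j ≠ l → u j i * word u c * u l i = 0)


lemma word_cast {A : Type*} [Ring A] {n : ℕ} (u : Fin n → Fin n → A)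
    {m k : ℕ} (h : m = k) (c : Fin k → Fin n × Fin n) :
    word u (fun r : Fin m => c (Fin.cast h r)) = word u c := by
  subst h; rfl

lemma word_split {A : Type*} [Ring A] {n : ℕ} (u : Fin n → Fin n → A)
    {k l : ℕ} (c : Fin (k + l) → Fin n × Fin n) :
    word u c = word u (fun r => c (Fin.castAdd l r)) *
      word u (fun r => c (Fin.natAdd k r)) := by
  simp [word, List.ofFn_add, List.prod_append, Function.comp]
  rfl

/-- For a matrix of self-adjoint generators that is orthogonal, the `k`-cubic
relations imply the `2k`-cubic relations. -/
theorem kCubic_imp_two_kCubic {A : Type*} [Ring A] [StarRing A] {n : ℕ}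
    (u : Fin n → Fin n → A)
    (hsa : ∀ i j, star (u i j) = u i j)
    (horth_row : ∀ i j, ∑ m, u i m * u j m = if i = j then (1 : A) else 0)
    (horth_col : ∀ i j, ∑ m, u m i * u m j = if i = j then (1 : A) else 0)
    (k : ℕ) (hk : KCubic u k) : KCubic u (2 * k) := by
  intro c
  set c₁ : Fin k → Fin n × Fin n := fun r => c (Fin.cast (two_mul k).symm (Fin.castAdd k r)) with hc1
  set c₂ : Fin k → Fin n × Fin n := fun r => c (Fin.cast (two_mul k).symm (Fin.natAdd k r)) with hc2
  have hw : word u c = word u c₁ * word u c₂ := by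
    rw [← word_cast u (two_mul k).symm c, word_split]
  constructor
  · intro i j l hjl
    have h1 : (∑ m, u i m * u i m) = (1 : A) := by simpa using horth_row i i
    have key : u i j * word u c * u i l
        = ∑ m, (u i j * word u c₁ * u i m) * (u i m * (word u c₂ * u i l)) := by
      rw [hw]
      calc u i j * (word u c₁ * word u c₂) * u i l
          = u i j * word u c₁ * ((∑ m, u i m * u i m) * (word u c₂ * u i l)) := by
            rw [h1]; simp [mul_assoc]
        _ = ∑ m, (u i j * word u c₁ * u i m) * (u i m * (word u c₂ * u i l)) := by
            rw [Finset.sum_mul, Finset.mul_sum]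
            exact Finset.sum_congr rfl fun m _ => by simp [mul_assoc]
    rw [key]
    refine Finset.sum_eq_zero fun m _ => ?_
    by_cases hm : m = j
    · subst hm
      have h2 : u i m * (word u c₂ * u i l) = 0 := by
        rw [← mul_assoc]; exact (hk c₂).1 i m l hjl
      rw [h2, mul_zero]
    · have h2 : u i j * word u c₁ * u i m = 0 :=
        (hk c₁).1 i j m (fun h => hm h.symm)
      rw [h2, zero_mul]
  · intro i j l hjl
    have h1 : (∑ m, u m i * u m i) = (1 : A) := by simpa using horth_col i i
    have key : u j i * word u c * u l i
        = ∑ m, (u j i * word u c₁ * u m i) * (u m i * (word u c₂ * u l i)) := by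
      rw [hw]
      calc u j i * (word u c₁ * word u c₂) * u l i
          = u j i * word u c₁ * ((∑ m, u m i * u m i) * (word u c₂ * u l i)) := by
            rw [h1]; simp [mul_assoc]
        _ = ∑ m, (u j i * word u c₁ * u m i) * (u m i * (word u c₂ * u l i)) := by
            rw [Finset.sum_mul, Finset.mul_sum]
            exact Finset.sum_congr rfl fun m _ => by simp [mul_assoc]
    rw [key]
    refine Finset.sum_eq_zero fun m _ => ?_
    by_cases hm : m = j
    · subst hm
      have h2 : u m i * (word u c₂ * u l i) = 0 := by
        rw [← mul_assoc]; exact (hk c₂).2 i m l hjl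
      rw [h2, mul_zero]
    · have h2 : u j i * word u c₁ * u m i = 0 :=
        (hk c₁).2 i j m (fun h => hm h.symm)
      rw [h2, zero_mul]
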